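/- arXiv:2007.03438 — 8 statements merged into one kernel-verified Lean document; each statement's English description precedes it below -/
import Mathlib

section
/- Let X be a nonempty finite set, P : X × X → ℝ a row-stochastic matrix, γ ∈ [0,1), R : X → ℝ, μ : X → ℝ with μ ≥ 0 and ∑_x μ(x) = 1, and dD : X → ℝ with dD(x) > 0 for all x. Let dπ be the unique solution of d = (1−γ) μ + γ Pᵀ d, set ζ*(x) := dπ(x)/dD(x), and let ρ := ∑_x dπ(x) R(x). Then for every Q : X → ℝ, the Lagrangian estimator built from the exact dual solution is exact: ∑_x dD(x) ζ*(x) R(x) + ∑_x Q(x) ((1−γ) μ(x) + γ (Pᵀ(dD·ζ*))(x) − dD(x) ζ*(x)) = ρ, where (dD·ζ*)(x) := dD(x)ζ*(x). -/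
/-- The other half of the doubly robust property: the Lagrangian estimator built
from the exact dual solution `ζ* = dπ / dD` equals the policy value `ρ`, for every primal
variable `Q`. -/
theorem stmt_6 {X : Type*} [Fintype X] [Nonempty X]
    (P : X → X → ℝ) (hPnonneg : ∀ x y, 0 ≤ P x y) (hProw : ∀ x, ∑ y, P x y = 1)
    (γ : ℝ) (hγ0 : 0 ≤ γ) (hγ1 : γ < 1)
    (R : X → ℝ) (μ : X → ℝ) (hμnonneg : ∀ x, 0 ≤ μ x) (hμsum : ∑ x, μ x = 1)
    (dD : X → ℝ) (hdD : ∀ x, 0 < dD x)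
    (dπ : X → ℝ) (hdπ : ∀ x, dπ x = (1 - γ) * μ x + γ * ∑ y, P y x * dπ y)
    (ζs : X → ℝ) (hζs : ∀ x, ζs x = dπ x / dD x)
    (ρ : ℝ) (hρ : ρ = ∑ x, dπ x * R x) :
    ∀ Q : X → ℝ,
      (∑ x, dD x * ζs x * R x) +
        ∑ x, Q x * ((1 - γ) * μ x + γ * (∑ y, P y x * (dD y * ζs y)) - dD x * ζs x) = ρ := by
  intro Q
  have key : ∀ x, dD x * ζs x = dπ x := by
    intro x
    rw [hζs]
    rw [mul_div_cancel₀ _ (hdD x).ne']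
  simp only [key]
  have hz : ∀ x, Q x * ((1 - γ) * μ x + γ * (∑ y, P y x * dπ y) - dπ x) = 0 := by
    intro x
    rw [← hdπ x]
    ring
  rw [Finset.sum_congr rfl (fun x _ => hz x), Finset.sum_const_zero, add_zero, hρ]
end

section
/- Let X be a nonempty finite set, P : X × X → ℝ a row-stochastic matrix, γ ∈ [0,1), R : X → ℝ, μ : X → ℝ with μ ≥ 0 and ∑_x μ(x) = 1, dD : X → ℝ with dD(x) > 0 for all x, α_ζ > 0, α_R ∈ ℝ, and f₂ : ℝ → ℝ convex and differentiable. Define the dual-regularized Lagrangian L(ζ, Q) := (1−γ) ∑_x μ(x) Q(x) + ∑_x dD(x) ζ(x) (α_R R(x) + γ (P Q)(x) − Q(x)) − α_ζ ∑_x dD(x) f₂(ζ(x)) for ζ, Q : X → ℝ. Let Qπ solve Q = R + γPQ, dπ solve d = (1−γ)μ + γPᵀd, and set ζ*(x) := dπ(x)/dD(x) and Q* := α_R Qπ − α_ζ (I − γP)^{-1} (f₂' ∘ ζ*). Then (ζ*, Q*) is a saddle point of L: for all ζ : X → ℝ, L(ζ, Q*) ≤ L(ζ*, Q*), and for all Q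 : X → ℝ, L(ζ*, Q*) ≤ L(ζ*, Q). In particular the maximizing dual solution is ζ* = dπ/dD, so the dual estimator ∑_x dD(x) ζ*(x) R(x) equals the policy value ρ := ∑_x dπ(x) R(x), for every α_R and regardless of whether the positivity constraint ζ ≥ 0 is imposed (since ζ* ≥ 0). -/
/-- The dual-regularized Lagrangian
`L(ζ, Q) = (1-γ)⟨μ, Q⟩ + ∑ dD·ζ·(α_R R + γ P Q - Q) - α_ζ ∑ dD·f₂(ζ)`. -/
def dualRegLagrangian {X : Type*} [Fintype X] (P : X → X → ℝ) (γ : ℝ)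
    (R μ dD : X → ℝ) (αζ αR : ℝ) (f₂ : ℝ → ℝ) (ζ Q : X → ℝ) : ℝ :=
  (1 - γ) * (∑ x, μ x * Q x) +
    (∑ x, dD x * ζ x * (αR * R x + γ * (∑ y, P x y * Q y) - Q x)) -
    αζ * ∑ x, dD x * f₂ (ζ x)

/-- Tangent-line inequality for a convex differentiable function on ℝ. -/
lemma tangent_le_aux {f : ℝ → ℝ} (hc : ConvexOn ℝ Set.univ f) (hd : Differentiable ℝ f)
    (a b : ℝ) : deriv f a * (b - a) ≤ f b - f a := by
  rcases lt_trichotomy a b with h | h | h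
  · have hs := hc.deriv_le_slope (Set.mem_univ a) (Set.mem_univ b) h (hd a)
    rw [slope_def_field] at hs
    have hne : a - b ≠ 0 := by intro hh; linarith
    have h2 := mul_le_mul_of_nonneg_right hs (by linarith : (0:ℝ) ≤ b - a)
    have h3 : (f b - f a) / (b - a) * (b - a) = f b - f a :=
      div_mul_cancel₀ _ (sub_ne_zero.mpr h.ne')
    linarith [h3 ▸ h2]
  · simp [h]
  · have hs := hc.slope_le_deriv (Set.mem_univ b) (Set.mem_univ a) h (hd a)
    rw [slope_def_field] at hs
    have hne : b - a ≠ 0 := by intro hh; linarith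
    have h2 := mul_le_mul_of_nonneg_right hs (by linarith : (0:ℝ) ≤ a - b)
    have h3 : (f a - f b) / (a - b) * (a - b) = f a - f b :=
      div_mul_cancel₀ _ (sub_ne_zero.mpr h.ne')
    have h4 : deriv f a * (b - a) = -(deriv f a * (a - b)) := by ring
    linarith [h3 ▸ h2]

/-- In the configuration `α_Q = 0, α_ζ > 0` (cases v–viii of Theorem 2), the pair
`(ζ*, Q*)` with `ζ* = dπ/dD` and `Q* = α_R Qπ - α_ζ (I - γP)⁻¹(f₂' ∘ ζ*)` is a saddle point of
the dual-regularized Lagrangian; in particular `ζ* ≥ 0` and the dual estimator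
`∑ dD·ζ*·R` equals the policy value `∑ dπ·R`. -/
theorem stmt_7 {X : Type*} [Fintype X] [Nonempty X]
    (P : X → X → ℝ) (hPnonneg : ∀ x y, 0 ≤ P x y) (hProw : ∀ x, ∑ y, P x y = 1)
    (γ : ℝ) (hγ0 : 0 ≤ γ) (hγ1 : γ < 1)
    (R : X → ℝ) (μ : X → ℝ) (hμnonneg : ∀ x, 0 ≤ μ x) (hμsum : ∑ x, μ x = 1)
    (dD : X → ℝ) (hdD : ∀ x, 0 < dD x)
    (αζ : ℝ) (hαζ : 0 < αζ) (αR : ℝ)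
    (f₂ : ℝ → ℝ) (hf₂conv : ConvexOn ℝ Set.univ f₂) (hf₂diff : Differentiable ℝ f₂)
    (Qπ : X → ℝ) (hQπ : ∀ x, Qπ x = R x + γ * ∑ y, P x y * Qπ y)
    (dπ : X → ℝ) (hdπ : ∀ x, dπ x = (1 - γ) * μ x + γ * ∑ y, P y x * dπ y)
    (ζs : X → ℝ) (hζs : ∀ x, ζs x = dπ x / dD x)
    -- `Qs = α_R Qπ - α_ζ (I - γP)⁻¹ (f₂' ∘ ζs)`, characterized by `(I - γP) Qs = α_R R - α_ζ f₂'∘ζs`: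
    (Qs : X → ℝ)
    (hQs : ∀ x, Qs x = αR * R x - αζ * deriv f₂ (ζs x) + γ * ∑ y, P x y * Qs y) :
    (∀ ζ : X → ℝ, dualRegLagrangian P γ R μ dD αζ αR f₂ ζ Qs ≤
        dualRegLagrangian P γ R μ dD αζ αR f₂ ζs Qs) ∧
    (∀ Q : X → ℝ, dualRegLagrangian P γ R μ dD αζ αR f₂ ζs Qs ≤
        dualRegLagrangian P γ R μ dD αζ αR f₂ ζs Q) ∧
    (∀ x, 0 ≤ ζs x) ∧
    (∑ x, dD x * ζs x * R x = ∑ x, dπ x * R x) := by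
  have hγ' : (0:ℝ) < 1 - γ := by linarith
  -- Step 1: dπ is nonnegative.
  set m : X → ℝ := fun x => min (dπ x) 0 with hm
  have hmle : ∀ x, m x ≤ 0 := fun x => min_le_right _ _
  have hstep : ∀ x, γ * ∑ y, P y x * m y ≤ m x := by
    intro x
    have h2 : γ * ∑ y, P y x * m y ≤ 0 := by
      apply mul_nonpos_of_nonneg_of_nonpos hγ0
      apply Finset.sum_nonpos; intro y _
      exact mul_nonpos_of_nonneg_of_nonpos (hPnonneg y x) (hmle y)
    have h3 : γ * ∑ y, P y x * m y ≤ dπ x := by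
      have hsle : ∑ y, P y x * m y ≤ ∑ y, P y x * dπ y := by
        apply Finset.sum_le_sum; intro y _
        exact mul_le_mul_of_nonneg_left (min_le_left _ _) (hPnonneg y x)
      have := mul_le_mul_of_nonneg_left hsle hγ0
      have hμ := mul_nonneg hγ'.le (hμnonneg x)
      rw [hdπ x]; linarith
    exact le_min h3 h2
  have hsum : ∑ x, m x = 0 := by
    have h1 : ∑ x, γ * ∑ y, P y x * m y ≤ ∑ x, m x :=
      Finset.sum_le_sum fun x _ => hstep x
    have h2 : ∑ x, γ * ∑ y, P y x * m y = γ * ∑ x, m x := by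
      rw [← Finset.mul_sum, Finset.sum_comm]
      congr 1
      refine Finset.sum_congr rfl fun y _ => ?_
      rw [← Finset.sum_mul, hProw y, one_mul]
    have h3 : γ * ∑ x, m x ≤ ∑ x, m x := by rw [← h2]; exact h1
    have h4 : ∑ x, m x ≤ 0 := Finset.sum_nonpos fun x _ => hmle x
    nlinarith
  have hdπnn : ∀ x, 0 ≤ dπ x := by
    intro x
    have := (Finset.sum_eq_zero_iff_of_nonpos (fun x _ => hmle x)).mp hsum x (Finset.mem_univ x)
    have : min (dπ x) 0 = 0 := this
    rcases le_total (dπ x) 0 with h | h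
    · rw [min_eq_left h] at this; linarith
    · exact h
  have hζnn : ∀ x, 0 ≤ ζs x := fun x => by
    rw [hζs x]; exact div_nonneg (hdπnn x) (hdD x).le
  -- key identity dD * ζs = dπ
  have hdζ : ∀ x, dD x * ζs x = dπ x := fun x => by
    rw [hζs x, mul_comm, div_mul_cancel₀ _ (hdD x).ne']
  -- dual estimator
  have hest : ∑ x, dD x * ζs x * R x = ∑ x, dπ x * R x :=
    Finset.sum_congr rfl fun x _ => by rw [hdζ x]
  -- stationarity: the Q-dependent part of L(ζs, ·) vanishes
  have hstat : ∀ Q : X → ℝ,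
      (1 - γ) * (∑ x, μ x * Q x) + ∑ x, dπ x * (γ * (∑ y, P x y * Q y) - Q x) = 0 := by
    intro Q
    have h1 : ∑ x, dπ x * (γ * (∑ y, P x y * Q y) - Q x)
        = (∑ x, ∑ y, γ * P x y * dπ x * Q y) - ∑ x, dπ x * Q x := by
      rw [← Finset.sum_sub_distrib]
      refine Finset.sum_congr rfl fun x _ => ?_
      rw [mul_sub, Finset.mul_sum]
      congr 1
      · rw [Finset.mul_sum]
        exact Finset.sum_congr rfl fun y _ => by ring
    have h2 : ∑ x, ∑ y, γ * P x y * dπ x * Q y = ∑ y, (dπ y - (1 - γ) * μ y) * Q y := by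
      rw [Finset.sum_comm]
      refine Finset.sum_congr rfl fun y _ => ?_
      have hst : γ * ∑ x, P x y * dπ x = dπ y - (1 - γ) * μ y := by
        have := hdπ y; linarith
      calc ∑ x, γ * P x y * dπ x * Q y = (γ * ∑ x, P x y * dπ x) * Q y := by
            rw [Finset.mul_sum, Finset.sum_mul]
            exact Finset.sum_congr rfl fun x _ => by ring
        _ = (dπ y - (1 - γ) * μ y) * Q y := by rw [hst]
    rw [h1, h2, Finset.mul_sum, ← Finset.sum_sub_distrib, ← Finset.sum_add_distrib]
    exact Finset.sum_eq_zero fun x _ => by ring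
  -- L(ζs, Q) is constant in Q
  have hLconst : ∀ Q : X → ℝ, dualRegLagrangian P γ R μ dD αζ αR f₂ ζs Q
      = αR * (∑ x, dπ x * R x) - αζ * ∑ x, dD x * f₂ (ζs x) := by
    intro Q
    unfold dualRegLagrangian
    have h2 : ∑ x, dD x * ζs x * (αR * R x + γ * (∑ y, P x y * Q y) - Q x)
        = αR * (∑ x, dπ x * R x) + ∑ x, dπ x * (γ * (∑ y, P x y * Q y) - Q x) := by
      rw [Finset.mul_sum, ← Finset.sum_add_distrib]
      refine Finset.sum_congr rfl fun x _ => ?_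
      rw [← hdζ x]; ring
    rw [h2]
    have := hstat Q
    linarith
  -- the gradient condition at Qs
  have hc : ∀ x, αR * R x + γ * (∑ y, P x y * Qs y) - Qs x = αζ * deriv f₂ (ζs x) := by
    intro x; have := hQs x; linarith
  -- rewrite L(·, Qs)
  have e : ∀ z : X → ℝ, dualRegLagrangian P γ R μ dD αζ αR f₂ z Qs
      = (1 - γ) * (∑ x, μ x * Qs x) +
        ∑ x, (dD x * z x * (αζ * deriv f₂ (ζs x)) - αζ * (dD x * f₂ (z x))) := by
    intro z
    unfold dualRegLagrangian
    have hsub : αζ * ∑ x, dD x * f₂ (z x) = ∑ x, αζ * (dD x * f₂ (z x)) :=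
      Finset.mul_sum _ _ _
    rw [hsub, add_sub_assoc, ← Finset.sum_sub_distrib]
    congr 1
    exact Finset.sum_congr rfl fun x _ => by rw [hc x]
  refine ⟨?_, ?_, hζnn, hest⟩
  · intro ζ
    rw [e ζ, e ζs]
    apply add_le_add le_rfl
    apply Finset.sum_le_sum
    intro x _
    have ht := tangent_le_aux hf₂conv hf₂diff (ζs x) (ζ x)
    have h2 : (αζ * dD x) * (deriv f₂ (ζs x) * (ζ x - ζs x))
        ≤ (αζ * dD x) * (f₂ (ζ x) - f₂ (ζs x)) :=
      mul_le_mul_of_nonneg_left ht (mul_nonneg hαζ.le (hdD x).le)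
    nlinarith [h2]
  · intro Q
    rw [hLconst Qs, hLconst Q]
end

section
/- Let X be a nonempty finite set, P : X × X → ℝ a row-stochastic matrix, γ ∈ [0,1), R : X → ℝ, μ : X → ℝ with μ ≥ 0 and ∑_x μ(x) = 1, dD : X → ℝ with dD(x) > 0 for all x, α_ζ > 0, α_R ∈ ℝ, and f₂ : ℝ → ℝ convex and differentiable. With the dual-regularized Lagrangian L(ζ, Q) := (1−γ) ∑_x μ(x) Q(x) + ∑_x dD(x) ζ(x) (α_R R(x) + γ (P Q)(x) − Q(x)) − α_ζ ∑_x dD(x) f₂(ζ(x)), and with ζ*(x) := dπ(x)/dD(x) and Q* := α_R Qπ − α_ζ (I − γP)^{-1} (f₂' ∘ ζ*), the saddle value equals L(ζ*, Q*) = α_R ∑_x dπ(x) R(x) − α_ζ ∑_x dD(x) f₂(dπ(x)/dD(x)), i.e. α_R·ρ(π) minus α_ζ times the f-divergence D_f(dπ‖dD) := ∑_x dD(x) f₂(dπ(x)/dD(x)). -/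
/-- The saddle value of the dual-regularized Lagrangian at
`ζ* = dπ/dD`, `Q* = α_R Qπ - α_ζ (I - γP)⁻¹(f₂' ∘ ζ*)` equals
`α_R · ρ(π) - α_ζ · D_f(dπ ‖ dD)`. -/
theorem stmt_8 {X : Type*} [Fintype X] [Nonempty X]
    (P : X → X → ℝ) (hPnonneg : ∀ x y, 0 ≤ P x y) (hProw : ∀ x, ∑ y, P x y = 1)
    (γ : ℝ) (hγ0 : 0 ≤ γ) (hγ1 : γ < 1)
    (R : X → ℝ) (μ : X → ℝ) (hμnonneg : ∀ x, 0 ≤ μ x) (hμsum : ∑ x, μ x = 1)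
    (dD : X → ℝ) (hdD : ∀ x, 0 < dD x)
    (αζ : ℝ) (hαζ : 0 < αζ) (αR : ℝ)
    (f₂ : ℝ → ℝ) (hf₂conv : ConvexOn ℝ Set.univ f₂) (hf₂diff : Differentiable ℝ f₂)
    (Qπ : X → ℝ) (hQπ : ∀ x, Qπ x = R x + γ * ∑ y, P x y * Qπ y)
    (dπ : X → ℝ) (hdπ : ∀ x, dπ x = (1 - γ) * μ x + γ * ∑ y, P y x * dπ y)
    (ζs : X → ℝ) (hζs : ∀ x, ζs x = dπ x / dD x)
    (Qs : X → ℝ)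
    (hQs : ∀ x, Qs x = αR * R x - αζ * deriv f₂ (ζs x) + γ * ∑ y, P x y * Qs y) :
    dualRegLagrangian P γ R μ dD αζ αR f₂ ζs Qs =
      αR * (∑ x, dπ x * R x) - αζ * ∑ x, dD x * f₂ (dπ x / dD x) := by
  have h1 : ∀ x, dD x * ζs x = dπ x := fun x => by
    rw [hζs, mul_div_cancel₀ _ (hdD x).ne']
  have h2 : (1 - γ) * (∑ x, μ x * Qs x)
      = (∑ x, dπ x * Qs x) - γ * ∑ x, dπ x * ∑ y, P x y * Qs y := by
    have : ∀ x, (1 - γ) * (μ x * Qs x)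
        = dπ x * Qs x - γ * ((∑ y, P y x * dπ y) * Qs x) := by
      intro x
      linear_combination (-(Qs x)) * hdπ x
    have hswap : ∑ x, (∑ y, P y x * dπ y) * Qs x = ∑ x, dπ x * ∑ y, P x y * Qs y := by
      simp only [Finset.sum_mul, Finset.mul_sum]
      rw [Finset.sum_comm]
      exact Finset.sum_congr rfl fun x _ => Finset.sum_congr rfl fun y _ => by ring
    rw [Finset.mul_sum, Finset.sum_congr rfl fun x _ => this x, Finset.sum_sub_distrib,
      ← Finset.mul_sum, hswap]
  have h3 : (∑ x, dD x * ζs x * (αR * R x + γ * (∑ y, P x y * Qs y) - Qs x))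
      = ∑ x, dπ x * (αR * R x + γ * (∑ y, P x y * Qs y) - Qs x) := by
    exact Finset.sum_congr rfl fun x _ => by rw [h1]
  have h4 : ∀ x, f₂ (ζs x) = f₂ (dπ x / dD x) := fun x => by rw [hζs]
  simp only [dualRegLagrangian, h3, h2]
  have h5 : ∀ x, dπ x * (αR * R x + γ * (∑ y, P x y * Qs y) - Qs x)
      = αR * (dπ x * R x) + γ * (dπ x * ∑ y, P x y * Qs y) - dπ x * Qs x := by
    intro x; ring
  rw [Finset.sum_congr rfl fun x _ => h5 x]
  simp only [Finset.sum_sub_distrib, Finset.sum_add_distrib, ← Finset.mul_sum, h4]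
  ring
end

section
/- Let X be a nonempty finite set, P : X × X → ℝ a row-stochastic matrix, γ ∈ [0,1), R : X → ℝ, μ : X → ℝ with μ ≥ 0 and ∑_x μ(x) = 1, dD : X → ℝ with dD(x) > 0 for all x, α_Q > 0, and f₁ : ℝ → ℝ convex and differentiable. Define the primal-regularized Lagrangian with reward L(ζ, Q) := (1−γ) ∑_x μ(x) Q(x) + α_Q ∑_x dD(x) f₁(Q(x)) + ∑_x dD(x) ζ(x) (R(x) + γ (P Q)(x) − Q(x)). Let Qπ solve Q = R + γPQ, dπ solve d = (1−γ)μ + γPᵀd, and set Q* := Qπ and ζ*(x) := dπ(x)/dD(x) + α_Q ((I − γPᵀ)^{-1}(dD · (f₁' ∘ Qπ)))(x) / dD(x), where (dD·(f₁'∘Qπ))(x) := dD(x) f₁'(Qπ(x)). Then (ζ*, Q*) is a saddle point: for all ζ : X → ℝ, L(ζ, Q*) = L(ζ*, Q*), and for all Q : X → ℝ, L(ζ*, Q*) ≤ L(ζ*, Q). In particular the primal estimator is unbiased: (1−γ) ∑_x μ(x) Q*(x) = ∑_x dπ(x) R(x). -/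
/-- The primal-regularized Lagrangian with reward
`L(ζ, Q) = (1-γ)⟨μ, Q⟩ + α_Q ∑ dD·f₁(Q) + ∑ dD·ζ·(R + γ P Q - Q)`. -/
def primalRegLagrangian {X : Type*} [Fintype X] (P : X → X → ℝ) (γ : ℝ)
    (R μ dD : X → ℝ) (αQ : ℝ) (f₁ : ℝ → ℝ) (ζ Q : X → ℝ) : ℝ :=
  (1 - γ) * (∑ x, μ x * Q x) + αQ * (∑ x, dD x * f₁ (Q x)) +
    ∑ x, dD x * ζ x * (R x + γ * (∑ y, P x y * Q y) - Q x)

lemma grad_ineq {f : ℝ → ℝ} (hconv : ConvexOn ℝ Set.univ f) (hdiff : Differentiable ℝ f)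
    (a b : ℝ) : f a + deriv f a * (b - a) ≤ f b := by
  rcases lt_trichotomy a b with h | h | h
  · have H := ConvexOn.deriv_le_slope hconv (Set.mem_univ a) (Set.mem_univ b) h (hdiff a)
    rw [slope_def_field] at H
    have hba : (0:ℝ) < b - a := by linarith
    rw [le_div_iff₀ hba] at H
    nlinarith [H]
  · simp [h]
  · have H := ConvexOn.slope_le_deriv hconv (Set.mem_univ b) (Set.mem_univ a) h (hdiff a)
    rw [slope_def_field] at H
    have hab : (0:ℝ) < a - b := by linarith
    rw [div_le_iff₀ hab] at H
    nlinarith [H]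

/-- Configuration `α_Q > 0, α_ζ = 0, α_R = 1`, `ζ` unconstrained (case i of
Theorem 2): with `Q* = Qπ` and `ζ* = dπ/dD + α_Q (I - γPᵀ)⁻¹(dD·(f₁'∘Qπ))/dD`, the pair
`(ζ*, Q*)` is a saddle point of the primal-regularized Lagrangian, and the primal estimator
is unbiased: `(1-γ)⟨μ, Q*⟩ = ⟨dπ, R⟩`. -/
theorem stmt_9 {X : Type*} [Fintype X] [Nonempty X]
    (P : X → X → ℝ) (hPnonneg : ∀ x y, 0 ≤ P x y) (hProw : ∀ x, ∑ y, P x y = 1)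
    (γ : ℝ) (hγ0 : 0 ≤ γ) (hγ1 : γ < 1)
    (R : X → ℝ) (μ : X → ℝ) (hμnonneg : ∀ x, 0 ≤ μ x) (hμsum : ∑ x, μ x = 1)
    (dD : X → ℝ) (hdD : ∀ x, 0 < dD x)
    (αQ : ℝ) (hαQ : 0 < αQ)
    (f₁ : ℝ → ℝ) (hf₁conv : ConvexOn ℝ Set.univ f₁) (hf₁diff : Differentiable ℝ f₁)
    (Qπ : X → ℝ) (hQπ : ∀ x, Qπ x = R x + γ * ∑ y, P x y * Qπ y)
    (dπ : X → ℝ) (hdπ : ∀ x, dπ x = (1 - γ) * μ x + γ * ∑ y, P y x * dπ y)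
    -- `u = (I - γPᵀ)⁻¹ (dD · (f₁' ∘ Qπ))`, characterized by `(I - γPᵀ) u = dD · (f₁' ∘ Qπ)`:
    (u : X → ℝ) (hu : ∀ x, u x = dD x * deriv f₁ (Qπ x) + γ * ∑ y, P y x * u y)
    (Qs : X → ℝ) (hQs : Qs = Qπ)
    (ζs : X → ℝ) (hζs : ∀ x, ζs x = dπ x / dD x + αQ * u x / dD x) :
    (∀ ζ : X → ℝ, primalRegLagrangian P γ R μ dD αQ f₁ ζ Qs =
        primalRegLagrangian P γ R μ dD αQ f₁ ζs Qs) ∧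
    (∀ Q : X → ℝ, primalRegLagrangian P γ R μ dD αQ f₁ ζs Qs ≤
        primalRegLagrangian P γ R μ dD αQ f₁ ζs Q) ∧
    ((1 - γ) * ∑ x, μ x * Qs x = ∑ x, dπ x * R x) := by
  subst hQs
  have hdD' : ∀ x, dD x ≠ 0 := fun x => (hdD x).ne'
  have hv : ∀ x, dD x * ζs x = dπ x + αQ * u x := by
    intro x
    rw [hζs x, mul_add, mul_div_assoc', mul_div_assoc', mul_div_cancel_left₀ _ (hdD' x),
      mul_div_cancel_left₀ _ (hdD' x)]
  have hPtv : ∀ y, γ * (∑ x, P x y * (dπ x + αQ * u x)) =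
      (dπ y + αQ * u y) - (1 - γ) * μ y - αQ * (dD y * deriv f₁ (Qs y)) := by
    intro y
    have hsplit : ∑ x, P x y * (dπ x + αQ * u x)
        = (∑ x, P x y * dπ x) + αQ * (∑ x, P x y * u x) := by
      rw [Finset.mul_sum, ← Finset.sum_add_distrib]
      exact Finset.sum_congr rfl fun x _ => by ring
    have h1 := hdπ y
    have h2 := hu y
    rw [hsplit]
    linear_combination -h1 - αQ * h2
  -- linear representation of the Lagrangian at ζ = ζs
  have main : ∀ Q : X → ℝ, primalRegLagrangian P γ R μ dD αQ f₁ ζs Q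
      = (∑ x, (dπ x + αQ * u x) * R x)
        + αQ * ∑ x, dD x * (f₁ (Q x) - deriv f₁ (Qs x) * Q x) := by
    intro Q
    unfold primalRegLagrangian
    simp only [hv]
    have dec : ∑ x, (dπ x + αQ * u x) * (R x + γ * (∑ y, P x y * Q y) - Q x)
        = (∑ x, (dπ x + αQ * u x) * R x)
          + (∑ x, (dπ x + αQ * u x) * (γ * ∑ y, P x y * Q y))
          - ∑ x, (dπ x + αQ * u x) * Q x := by
      rw [← Finset.sum_add_distrib, ← Finset.sum_sub_distrib]
      exact Finset.sum_congr rfl fun x _ => by ring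
    have swap : ∑ x, (dπ x + αQ * u x) * (γ * ∑ y, P x y * Q y)
        = ∑ y, (γ * ∑ x, P x y * (dπ x + αQ * u x)) * Q y := by
      simp only [Finset.mul_sum, Finset.sum_mul]
      rw [Finset.sum_comm]
      exact Finset.sum_congr rfl fun y _ => Finset.sum_congr rfl fun x _ => by ring
    have hmid : ∑ y, (γ * ∑ x, P x y * (dπ x + αQ * u x)) * Q y
        = (∑ y, (dπ y + αQ * u y) * Q y) - (1 - γ) * (∑ y, μ y * Q y)
          - αQ * ∑ y, dD y * (deriv f₁ (Qs y) * Q y) := by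
      rw [Finset.mul_sum, Finset.mul_sum, ← Finset.sum_sub_distrib, ← Finset.sum_sub_distrib]
      refine Finset.sum_congr rfl fun y _ => ?_
      rw [hPtv y]; ring
    have hF : ∑ x, dD x * (f₁ (Q x) - deriv f₁ (Qs x) * Q x)
        = (∑ x, dD x * f₁ (Q x)) - ∑ x, dD x * (deriv f₁ (Qs x) * Q x) := by
      rw [← Finset.sum_sub_distrib]
      exact Finset.sum_congr rfl fun x _ => by ring
    rw [dec, swap, hmid, hF]
    ring
  refine ⟨?_, ?_, ?_⟩
  · intro ζ
    have hzero : ∀ x, R x + γ * (∑ y, P x y * Qs y) - Qs x = 0 := by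
      intro x; have := hQπ x; linarith
    unfold primalRegLagrangian
    simp only [hzero, mul_zero, Finset.sum_const_zero]
  · intro Q
    rw [main Q, main Qs]
    refine add_le_add_right (mul_le_mul_of_nonneg_left (Finset.sum_le_sum fun x _ => ?_) hαQ.le) _
    have := grad_ineq hf₁conv hf₁diff (Qs x) (Q x)
    nlinarith [(hdD x).le, this]
  · have E1 : ∑ x, dπ x * Qs x
        = (∑ x, dπ x * R x) + γ * ∑ x, dπ x * ∑ y, P x y * Qs y := by
      rw [Finset.mul_sum, ← Finset.sum_add_distrib]
      refine Finset.sum_congr rfl fun x _ => ?_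
      rw [hQπ x]; ring
    have E2 : ∑ x, dπ x * Qs x
        = (1 - γ) * (∑ x, μ x * Qs x) + γ * ∑ x, (∑ y, P y x * dπ y) * Qs x := by
      rw [Finset.mul_sum, Finset.mul_sum, ← Finset.sum_add_distrib]
      refine Finset.sum_congr rfl fun x _ => ?_
      rw [hdπ x]; ring
    have swap2 : ∑ x, dπ x * ∑ y, P x y * Qs y = ∑ x, (∑ y, P y x * dπ y) * Qs x := by
      simp only [Finset.mul_sum, Finset.sum_mul]
      rw [Finset.sum_comm]
      exact Finset.sum_congr rfl fun x _ => Finset.sum_congr rfl fun y _ => by ring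
    rw [swap2] at E1
    linarith
end

section
/- Let X be a nonempty finite set, P : X × X → ℝ a row-stochastic matrix, γ ∈ [0,1), R : X → ℝ, μ : X → ℝ with μ ≥ 0 and ∑_x μ(x) = 1, dD : X → ℝ with dD(x) > 0 for all x, α_Q > 0, and f₁ : ℝ → ℝ convex and differentiable. With Qπ the unique solution of Q = R + γPQ, dπ the unique solution of d = (1−γ)μ + γPᵀd, and ζ*(x) := dπ(x)/dD(x) + α_Q ((I − γPᵀ)^{-1}(dD · (f₁' ∘ Qπ)))(x) / dD(x) (the optimal dual solution under primal regularization with reward), the dual estimator is biased by exactly α_Q ∑_x dD(x) f₁'(Qπ(x)) Qπ(x): that is, ∑_x dD(x) ζ*(x) R(x) = ∑_x dπ(x) R(x) + α_Q ∑_x dD(x) f₁'(Qπ(x)) Qπ(x). -/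
/-- In configuration `α_Q > 0, α_ζ = 0, α_R = 1` (case i of Theorem 2), the
optimal dual solution `ζ* = dπ/dD + α_Q (I - γPᵀ)⁻¹(dD·(f₁'∘Qπ))/dD` yields a dual estimator
biased by exactly `α_Q ∑ dD·f₁'(Qπ)·Qπ`. -/
theorem stmt_10 {X : Type*} [Fintype X] [Nonempty X]
    (P : X → X → ℝ) (hPnonneg : ∀ x y, 0 ≤ P x y) (hProw : ∀ x, ∑ y, P x y = 1)
    (γ : ℝ) (hγ0 : 0 ≤ γ) (hγ1 : γ < 1)
    (R : X → ℝ) (μ : X → ℝ) (hμnonneg : ∀ x, 0 ≤ μ x) (hμsum : ∑ x, μ x = 1)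
    (dD : X → ℝ) (hdD : ∀ x, 0 < dD x)
    (αQ : ℝ) (hαQ : 0 < αQ)
    (f₁ : ℝ → ℝ) (hf₁conv : ConvexOn ℝ Set.univ f₁) (hf₁diff : Differentiable ℝ f₁)
    (Qπ : X → ℝ) (hQπ : ∀ x, Qπ x = R x + γ * ∑ y, P x y * Qπ y)
    (dπ : X → ℝ) (hdπ : ∀ x, dπ x = (1 - γ) * μ x + γ * ∑ y, P y x * dπ y)
    -- `u = (I - γPᵀ)⁻¹ (dD · (f₁' ∘ Qπ))`, characterized by `(I - γPᵀ) u = dD · (f₁' ∘ Qπ)`: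
    (u : X → ℝ) (hu : ∀ x, u x = dD x * deriv f₁ (Qπ x) + γ * ∑ y, P y x * u y)
    (ζs : X → ℝ) (hζs : ∀ x, ζs x = dπ x / dD x + αQ * u x / dD x) :
    ∑ x, dD x * ζs x * R x =
      (∑ x, dπ x * R x) + αQ * ∑ x, dD x * deriv f₁ (Qπ x) * Qπ x := by
  have hkey : ∑ x, u x * R x = ∑ x, dD x * deriv f₁ (Qπ x) * Qπ x := by
    have h1 : ∑ x, u x * Qπ x
        = (∑ x, dD x * deriv f₁ (Qπ x) * Qπ x)
          + γ * ∑ x, u x * ∑ y, P x y * Qπ y := by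
      calc ∑ x, u x * Qπ x
          = ∑ x, (dD x * deriv f₁ (Qπ x) + γ * ∑ y, P y x * u y) * Qπ x := by
            refine Finset.sum_congr rfl fun x _ => by rw [← hu x]
        _ = (∑ x, dD x * deriv f₁ (Qπ x) * Qπ x)
            + γ * ∑ x, ∑ y, P y x * u y * Qπ x := by
            rw [Finset.mul_sum, ← Finset.sum_add_distrib]
            refine Finset.sum_congr rfl fun x _ => ?_
            rw [add_mul, mul_assoc γ, Finset.sum_mul]
        _ = (∑ x, dD x * deriv f₁ (Qπ x) * Qπ x)
            + γ * ∑ x, u x * ∑ y, P x y * Qπ y := by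
            congr 1
            rw [Finset.sum_comm]
            congr 1
            refine Finset.sum_congr rfl fun y _ => ?_
            rw [Finset.mul_sum]
            exact Finset.sum_congr rfl fun x _ => by ring
    have h2 : ∑ x, u x * R x
        = (∑ x, u x * Qπ x) - γ * ∑ x, u x * ∑ y, P x y * Qπ y := by
      rw [Finset.mul_sum, ← Finset.sum_sub_distrib]
      refine Finset.sum_congr rfl fun x _ => ?_
      have := hQπ x
      have hR : R x = Qπ x - γ * ∑ y, P x y * Qπ y := by linarith
      rw [hR]; ring
    rw [h2, h1]; ring
  calc ∑ x, dD x * ζs x * R x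
      = ∑ x, (dπ x * R x + αQ * (u x * R x)) := by
        refine Finset.sum_congr rfl fun x _ => ?_
        rw [hζs x]
        field_simp [(hdD x).ne']
    _ = (∑ x, dπ x * R x) + αQ * ∑ x, u x * R x := by
        rw [Finset.sum_add_distrib, Finset.mul_sum]
    _ = (∑ x, dπ x * R x) + αQ * ∑ x, dD x * deriv f₁ (Qπ x) * Qπ x := by rw [hkey]
end

section
/- Let X be a nonempty finite set, P : X × X → ℝ a row-stochastic matrix, γ ∈ [0,1), μ : X → ℝ with μ ≥ 0 and ∑_x μ(x) = 1, dD : X → ℝ with dD(x) > 0 for all x and ∑_x dD(x) = 1, α_Q > 0, and f₁ : ℝ → ℝ convex and differentiable with f₁'(c) = 0 for some c ∈ ℝ. Define the primal-regularized, reward-free Lagrangian with normalization L(ζ, Q, λ) := (1−γ) ∑_x μ(x) Q(x) + α_Q ∑_x dD(x) f₁(Q(x)) + λ + ∑_x dD(x) ζ(x) (γ (P Q)(x) − Q(x) − λ). Let dπ solve d = (1−γ)μ + γPᵀd and set ζ*(x) := dπ(x)/dD(x), Q* := the constant function c, λ* := (γ − 1)c. Then (ζ*, Q*, λ*) is a saddle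 point: for all ζ : X → ℝ, L(ζ, Q*, λ*) = L(ζ*, Q*, λ*), and for all Q : X → ℝ and λ ∈ ℝ, L(ζ*, Q*, λ*) ≤ L(ζ*, Q, λ); and the saddle value is L(ζ*, Q*, λ*) = α_Q f₁(c). In particular the dual solution is ζ* = dπ/dD, so the dual estimator ∑_x dD(x) ζ*(x) R(x) = ∑_x dπ(x) R(x) is unbiased for any reward R : X → ℝ. -/
/-- The primal-regularized, reward-free Lagrangian with normalization variable `λ`:
`L(ζ, Q, λ) = (1-γ)⟨μ, Q⟩ + α_Q ∑ dD·f₁(Q) + λ + ∑ dD·ζ·(γ P Q - Q - λ)`. -/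
def primalRegLagrangianNorm {X : Type*} [Fintype X] (P : X → X → ℝ) (γ : ℝ)
    (μ dD : X → ℝ) (αQ : ℝ) (f₁ : ℝ → ℝ) (ζ Q : X → ℝ) (lam : ℝ) : ℝ :=
  (1 - γ) * (∑ x, μ x * Q x) + αQ * (∑ x, dD x * f₁ (Q x)) + lam +
    ∑ x, dD x * ζ x * (γ * (∑ y, P x y * Q y) - Q x - lam)

/-- A convex differentiable function with vanishing derivative at `c` has a global min at `c`. -/
lemma convex_global_min {f : ℝ → ℝ} (hconv : ConvexOn ℝ Set.univ f)
    (hdiff : Differentiable ℝ f) {c : ℝ} (hc : deriv f c = 0) (x : ℝ) : f c ≤ f x := by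
  rcases lt_trichotomy x c with h | h | h
  · have h1 := hconv.slope_le_deriv (Set.mem_univ x) (Set.mem_univ c) h (hdiff c)
    rw [hc] at h1
    have hpos : (0:ℝ) < c - x := by linarith
    rw [slope_def_field, div_le_iff₀ hpos] at h1
    nlinarith
  · simp [h]
  · have h1 := hconv.deriv_le_slope (Set.mem_univ c) (Set.mem_univ x) h (hdiff c)
    rw [hc] at h1
    have hpos : (0:ℝ) < x - c := by linarith
    rw [slope_def_field, le_div_iff₀ hpos] at h1
    nlinarith

/-- Configuration `α_Q > 0, α_ζ = 0, α_R = 0` with the normalization variable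
`λ` (cases iii–iv of Theorem 2, GenDICE/GradientDICE): `(ζ*, Q*, λ*)` with `ζ* = dπ/dD`,
`Q* ≡ c` (where `f₁'(c) = 0`) and `λ* = (γ-1)c` is a saddle point, the saddle value is
`α_Q f₁(c)`, and the dual estimator is unbiased for any reward. -/
theorem stmt_12 {X : Type*} [Fintype X] [Nonempty X]
    (P : X → X → ℝ) (hPnonneg : ∀ x y, 0 ≤ P x y) (hProw : ∀ x, ∑ y, P x y = 1)
    (γ : ℝ) (hγ0 : 0 ≤ γ) (hγ1 : γ < 1)
    (μ : X → ℝ) (hμnonneg : ∀ x, 0 ≤ μ x) (hμsum : ∑ x, μ x = 1)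
    (dD : X → ℝ) (hdD : ∀ x, 0 < dD x) (hdDsum : ∑ x, dD x = 1)
    (αQ : ℝ) (hαQ : 0 < αQ)
    (f₁ : ℝ → ℝ) (hf₁conv : ConvexOn ℝ Set.univ f₁) (hf₁diff : Differentiable ℝ f₁)
    (c : ℝ) (hc : deriv f₁ c = 0)
    (dπ : X → ℝ) (hdπ : ∀ x, dπ x = (1 - γ) * μ x + γ * ∑ y, P y x * dπ y)
    (ζs : X → ℝ) (hζs : ∀ x, ζs x = dπ x / dD x)
    (Qs : X → ℝ) (hQs : ∀ x, Qs x = c)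
    (lams : ℝ) (hlams : lams = (γ - 1) * c) :
    (∀ ζ : X → ℝ, primalRegLagrangianNorm P γ μ dD αQ f₁ ζ Qs lams =
        primalRegLagrangianNorm P γ μ dD αQ f₁ ζs Qs lams) ∧
    (∀ (Q : X → ℝ) (lam : ℝ), primalRegLagrangianNorm P γ μ dD αQ f₁ ζs Qs lams ≤
        primalRegLagrangianNorm P γ μ dD αQ f₁ ζs Q lam) ∧
    (primalRegLagrangianNorm P γ μ dD αQ f₁ ζs Qs lams = αQ * f₁ c) ∧
    (∀ R : X → ℝ, ∑ x, dD x * ζs x * R x = ∑ x, dπ x * R x) := by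
  -- dD·ζs = dπ
  have hdz : ∀ x, dD x * ζs x = dπ x := by
    intro x; rw [hζs, mul_comm, div_mul_cancel₀ _ (hdD x).ne']
  -- ∑ dπ = 1
  have hS : ∑ x, dπ x = 1 := by
    have h1 : ∑ x, dπ x = (1 - γ) + γ * ∑ x, dπ x := by
      calc ∑ x, dπ x = ∑ x, ((1 - γ) * μ x + γ * ∑ y, P y x * dπ y) :=
            Finset.sum_congr rfl fun x _ => hdπ x
        _ = (1 - γ) * ∑ x, μ x + γ * ∑ x, ∑ y, P y x * dπ y := by
            rw [Finset.sum_add_distrib, Finset.mul_sum, Finset.mul_sum]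
        _ = (1 - γ) + γ * ∑ y, dπ y := by
            rw [hμsum, Finset.sum_comm, mul_one]
            congr 1
            refine congrArg (γ * ·) (Finset.sum_congr rfl fun y _ => ?_)
            rw [← Finset.sum_mul, hProw, one_mul]
    have hne : (1:ℝ) - γ ≠ 0 := by linarith
    have : (1 - γ) * (∑ x, dπ x) = (1 - γ) * 1 := by ring_nf; ring_nf at h1; linarith
    exact mul_left_cancel₀ hne this
  -- the constraint term vanishes at (Qs, lams)
  have hzero : ∀ x, γ * (∑ y, P x y * Qs y) - Qs x - lams = 0 := by
    intro x
    have : ∑ y, P x y * Qs y = c := by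
      simp only [hQs, ← Finset.sum_mul, hProw, one_mul]
    rw [this, hQs, hlams]; ring
  -- value of L(·, Qs, lams)
  have hval : ∀ ζ : X → ℝ, primalRegLagrangianNorm P γ μ dD αQ f₁ ζ Qs lams = αQ * f₁ c := by
    intro ζ
    unfold primalRegLagrangianNorm
    have h1 : ∑ x, dD x * ζ x * (γ * (∑ y, P x y * Qs y) - Qs x - lams) = 0 := by
      refine Finset.sum_eq_zero fun x _ => ?_
      rw [hzero x]; ring
    have h2 : ∑ x, μ x * Qs x = c := by
      simp only [hQs, ← Finset.sum_mul, hμsum, one_mul]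
    have h3 : ∑ x, dD x * f₁ (Qs x) = f₁ c := by
      simp only [hQs, ← Finset.sum_mul, hdDsum, one_mul]
    rw [h1, h2, h3, hlams]; ring
  -- L(ζs, Q, lam) = αQ ∑ dD f₁(Q)
  have hred : ∀ (Q : X → ℝ) (lam : ℝ),
      primalRegLagrangianNorm P γ μ dD αQ f₁ ζs Q lam = αQ * ∑ x, dD x * f₁ (Q x) := by
    intro Q lam
    unfold primalRegLagrangianNorm
    have h1 : ∑ x, dD x * ζs x * (γ * (∑ y, P x y * Q y) - Q x - lam)
        = ∑ x, dπ x * (γ * (∑ y, P x y * Q y)) - ∑ x, dπ x * Q x - lam := by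
      have : ∀ x, dD x * ζs x * (γ * (∑ y, P x y * Q y) - Q x - lam)
          = dπ x * (γ * (∑ y, P x y * Q y)) - dπ x * Q x - dπ x * lam := by
        intro x; rw [← hdz x]; ring
      rw [Finset.sum_congr rfl fun x _ => this x]
      rw [Finset.sum_sub_distrib, Finset.sum_sub_distrib, ← Finset.sum_mul, hS, one_mul]
    have h2 : ∑ x, dπ x * (γ * (∑ y, P x y * Q y))
        = ∑ y, (dπ y - (1 - γ) * μ y) * Q y := by
      calc ∑ x, dπ x * (γ * (∑ y, P x y * Q y))
          = ∑ x, ∑ y, γ * (P x y * dπ x) * Q y := by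
            refine Finset.sum_congr rfl fun x _ => ?_
            simp only [Finset.mul_sum]
            exact Finset.sum_congr rfl fun y _ => by ring
        _ = ∑ y, (γ * ∑ x, P x y * dπ x) * Q y := by
            rw [Finset.sum_comm]
            refine Finset.sum_congr rfl fun y _ => ?_
            rw [Finset.mul_sum, Finset.sum_mul]
        _ = ∑ y, (dπ y - (1 - γ) * μ y) * Q y := by
            refine Finset.sum_congr rfl fun y _ => ?_
            have := hdπ y
            have hg : γ * ∑ x, P x y * dπ x = dπ y - (1 - γ) * μ y := by linarith
            rw [hg]
    rw [h1, h2]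
    have h3 : ∑ y, (dπ y - (1 - γ) * μ y) * Q y
        = ∑ y, dπ y * Q y - (1 - γ) * ∑ y, μ y * Q y := by
      rw [Finset.mul_sum, ← Finset.sum_sub_distrib]
      exact Finset.sum_congr rfl fun y _ => by ring
    rw [h3]; ring
  refine ⟨fun ζ => by rw [hval ζ, hval ζs], fun Q lam => ?_, ?_, fun R => ?_⟩
  · rw [hval ζs, hred Q lam]
    have hge : f₁ c ≤ ∑ x, dD x * f₁ (Q x) := by
      calc f₁ c = ∑ x, dD x * f₁ c := by rw [← Finset.sum_mul, hdDsum, one_mul]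
        _ ≤ ∑ x, dD x * f₁ (Q x) := by
            refine Finset.sum_le_sum fun x _ => ?_
            exact mul_le_mul_of_nonneg_left
              (convex_global_min hf₁conv hf₁diff hc (Q x)) (hdD x).le
    nlinarith
  · exact hval ζs
  · exact Finset.sum_congr rfl fun x _ => by rw [hdz x]
end

section
/- Let X be a nonempty finite set, P : X × X → ℝ a row-stochastic matrix, γ ∈ [0,1), R : X → ℝ, μ : X → ℝ with μ ≥ 0 and ∑_x μ(x) = 1, dD : X → ℝ with dD(x) > 0 for all x, k ∈ ℕ, and φ : X → ℝ^k a feature map. Define Ξ := ∑_x dD(x) φ(x) (φ(x) − γ (Pφ)(x))ᵀ ∈ ℝ^{k×k} (with (Pφ)(x) := ∑_y P(x,y) φ(y)) and assume Ξ is invertible. Then v := (1−γ) (Ξᵀ)^{-1} ∑_x μ(x) φ(x) is the unique vector satisfying the dual first-order condition (1−γ) ∑_x μ(x) φ(x) + ∑_x dD(x) ⟨φ(x), v⟩ (γ (Pφ)(x) − φ(x)) = 0, and the resulting dual (ratio-based) estimate equals the LSTDQ estimate: ∑_x dD(x) R(x) ⟨φ(x), v⟩ = (1−γ) (∑_x μ(x)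 φ(x))ᵀ Ξ^{-1} (∑_x dD(x) R(x) φ(x)). In particular, under linear parametrization the dual estimate coincides with the primal LSTDQ estimate. -/
open Matrix

/-- LSTDQ via the dual first-order condition. With linear features `φ`,
`Ξ := ∑ dD(x)·φ(x)(φ(x) - γ(Pφ)(x))ᵀ` invertible, the vector
`v := (1-γ)(Ξᵀ)⁻¹ ∑ μ(x)φ(x)` is the unique solution of the dual first-order condition
`(1-γ)∑ μ(x)φ(x) + ∑ dD(x)⟨φ(x), v⟩(γ(Pφ)(x) - φ(x)) = 0`, and the dual (ratio-based)
estimate `∑ dD(x)R(x)⟨φ(x), v⟩` equals the LSTDQ estimate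
`(1-γ)(∑ μ(x)φ(x))ᵀ Ξ⁻¹ (∑ dD(x)R(x)φ(x))`. -/
theorem stmt_14 {X : Type*} [Fintype X] [Nonempty X]
    (P : X → X → ℝ) (hPnonneg : ∀ x y, 0 ≤ P x y) (hProw : ∀ x, ∑ y, P x y = 1)
    (γ : ℝ) (hγ0 : 0 ≤ γ) (hγ1 : γ < 1)
    (R : X → ℝ) (μ : X → ℝ) (hμnonneg : ∀ x, 0 ≤ μ x) (hμsum : ∑ x, μ x = 1)
    (dD : X → ℝ) (hdD : ∀ x, 0 < dD x)
    (k : ℕ) (φ : X → Fin k → ℝ)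
    (Ξ : Matrix (Fin k) (Fin k) ℝ)
    (hΞ : ∀ i j, Ξ i j = ∑ x, dD x * φ x i * (φ x j - γ * ∑ y, P x y * φ y j))
    (hΞinv : IsUnit Ξ)
    (a : Fin k → ℝ) (ha : ∀ i, a i = ∑ x, μ x * φ x i)
    (b : Fin k → ℝ) (hb : ∀ i, b i = ∑ x, dD x * R x * φ x i)
    (v : Fin k → ℝ) (hv : v = (1 - γ) • (Ξᵀ⁻¹ *ᵥ a)) :
    (∀ i, (1 - γ) * a i + ∑ x, dD x * (∑ j, φ x j * v j) *
        (γ * (∑ y, P x y * φ y i) - φ x i) = 0) ∧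
    (∀ v' : Fin k → ℝ,
      (∀ i, (1 - γ) * a i + ∑ x, dD x * (∑ j, φ x j * v' j) *
        (γ * (∑ y, P x y * φ y i) - φ x i) = 0) → v' = v) ∧
    (∑ x, dD x * R x * ∑ j, φ x j * v j =
      (1 - γ) * ∑ i, a i * (Ξ⁻¹ *ᵥ b) i) := by
  have hΞTinv : IsUnit Ξᵀ := (Matrix.isUnit_transpose Ξ).mpr hΞinv
  have hΞdet : IsUnit Ξ.det := (Matrix.isUnit_iff_isUnit_det Ξ).mp hΞinv
  have hΞTdet : IsUnit Ξᵀ.det := (Matrix.isUnit_iff_isUnit_det Ξᵀ).mp hΞTinv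
  -- Key rewrite: the FOC sum equals (1-γ)*a i - (Ξᵀ *ᵥ w) i
  have key : ∀ (w : Fin k → ℝ) (i : Fin k),
      (∑ x, dD x * (∑ j, φ x j * w j) * (γ * (∑ y, P x y * φ y i) - φ x i))
        = -(Ξᵀ *ᵥ w) i := by
    intro w i
    have : (Ξᵀ *ᵥ w) i = ∑ j, Ξ j i * w j := by
      simp [Matrix.mulVec, dotProduct, Matrix.transpose]
    rw [this]
    have hrw : ∀ j, Ξ j i * w j
        = ∑ x, dD x * φ x j * (φ x i - γ * ∑ y, P x y * φ y i) * w j := by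
      intro j; rw [hΞ j i, Finset.sum_mul]
    simp_rw [hrw]
    rw [Finset.sum_comm, ← Finset.sum_neg_distrib]
    refine Finset.sum_congr rfl fun x _ => ?_
    rw [Finset.mul_sum, Finset.sum_mul, ← Finset.sum_neg_distrib]
    refine Finset.sum_congr rfl fun j _ => ?_
    ring
  -- FOC ↔ Ξᵀ *ᵥ w = (1-γ) • a
  have foc_iff : ∀ w : Fin k → ℝ,
      (∀ i, (1 - γ) * a i + ∑ x, dD x * (∑ j, φ x j * w j) *
        (γ * (∑ y, P x y * φ y i) - φ x i) = 0)
      ↔ Ξᵀ *ᵥ w = (1 - γ) • a := by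
    intro w
    constructor
    · intro h
      funext i
      have := h i
      rw [key w i] at this
      have : (1 - γ) * a i = (Ξᵀ *ᵥ w) i := by linarith
      simpa [Pi.smul_apply, smul_eq_mul] using this.symm
    · intro h i
      rw [key w i]
      have : (Ξᵀ *ᵥ w) i = (1 - γ) * a i := by rw [h]; simp
      linarith
  have hveq : Ξᵀ *ᵥ v = (1 - γ) • a := by
    rw [hv, Matrix.mulVec_smul, Matrix.mulVec_mulVec,
      Matrix.mul_nonsing_inv _ hΞTdet, Matrix.one_mulVec]
  refine ⟨(foc_iff v).mpr hveq, ?_, ?_⟩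
  · intro v' h
    have h' := (foc_iff v').mp h
    have : Ξᵀ⁻¹ *ᵥ (Ξᵀ *ᵥ v') = Ξᵀ⁻¹ *ᵥ ((1 - γ) • a) := by rw [h']
    rw [Matrix.mulVec_mulVec, Matrix.nonsing_inv_mul _ hΞTdet, Matrix.one_mulVec,
      Matrix.mulVec_smul] at this
    rw [this, hv]
  · -- dual estimate equals LSTDQ
    have lhs_eq : (∑ x, dD x * R x * ∑ j, φ x j * v j) = ∑ j, b j * v j := by
      simp_rw [hb, Finset.sum_mul]
      rw [Finset.sum_comm]
      refine Finset.sum_congr rfl fun x _ => ?_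
      rw [Finset.mul_sum]
      refine Finset.sum_congr rfl fun j _ => ?_
      ring
    rw [lhs_eq, hv]
    have : ∀ j, b j * ((1 - γ) • (Ξᵀ⁻¹ *ᵥ a)) j = (1 - γ) * (b j * (Ξᵀ⁻¹ *ᵥ a) j) := by
      intro j; simp [smul_eq_mul]; ring
    simp_rw [this, ← Finset.mul_sum]
    congr 1
    have hT : Ξᵀ⁻¹ = (Ξ⁻¹)ᵀ := (Matrix.transpose_nonsing_inv Ξ).symm
    have : (∑ j, b j * (Ξᵀ⁻¹ *ᵥ a) j) = b ⬝ᵥ (Ξᵀ⁻¹ *ᵥ a) := rfl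
    rw [this, hT, Matrix.dotProduct_mulVec, Matrix.vecMul_transpose,
      dotProduct_comm]
    rfl
end

section
/- Let X be a nonempty finite set, P : X × X → ℝ a row-stochastic matrix, γ ∈ [0,1), R : X → ℝ, μ : X → ℝ with μ ≥ 0 and ∑_x μ(x) = 1, dD : X → ℝ with dD(x) > 0 for all x, α_ζ > 0, and α_R ∈ ℝ. Define the unconstrained primal objective J(Q) := (1−γ) ∑_x μ(x) Q(x) + (1/(2 α_ζ)) ∑_x dD(x) (α_R R(x) + γ (P Q)(x) − Q(x))². Then J has a unique global minimizer Q* : X → ℝ, and the dual variable recovered from it equals the true stationary distribution correction ratio: (α_R R(x) + γ (P Q*)(x) − Q*(x)) / α_ζ = dπ(x)/dD(x) for every x ∈ X, where dπ is the unique solution of d = (1−γ) μ + γ Pᵀ d. Consequently ∑_x dD(x) · (α_R R(x) + γ(PQ*)(x) − Q*(x))/α_ζ · R(x) = ∑_x dπ(x) R(x) = ρ(π). -/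
/-- The unconstrained primal objective
`J(Q) = (1-γ)⟨μ, Q⟩ + (1/(2α_ζ)) ∑ dD·(α_R R + γ P Q - Q)²`. -/
noncomputable def unconstrainedPrimal {X : Type*} [Fintype X] (P : X → X → ℝ) (γ : ℝ)
    (R μ dD : X → ℝ) (αζ αR : ℝ) (Q : X → ℝ) : ℝ :=
  (1 - γ) * (∑ x, μ x * Q x) +
    (1 / (2 * αζ)) * ∑ x, dD x * (αR * R x + γ * (∑ y, P x y * Q y) - Q x) ^ 2

lemma aux_fix_zero {X : Type*} [Fintype X] [Nonempty X]
    (P : X → X → ℝ) (hPnonneg : ∀ x y, 0 ≤ P x y) (hProw : ∀ x, ∑ y, P x y = 1)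
    (γ : ℝ) (hγ0 : 0 ≤ γ) (hγ1 : γ < 1)
    (h : X → ℝ) (hh : ∀ x, h x = γ * ∑ y, P x y * h y) : h = 0 := by
  obtain ⟨x0, -, hx0⟩ := Finset.exists_max_image Finset.univ (fun x => |h x|)
    Finset.univ_nonempty
  have hz : |h x0| = 0 := by
    have h1 : |h x0| ≤ γ * |h x0| := by
      calc |h x0| = γ * |∑ y, P x0 y * h y| := by
            rw [hh x0, abs_mul, abs_of_nonneg hγ0]
        _ ≤ γ * ∑ y, |P x0 y * h y| := by
            exact mul_le_mul_of_nonneg_left (Finset.abs_sum_le_sum_abs _ _) hγ0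
        _ ≤ γ * ∑ y, P x0 y * |h x0| := by
            refine mul_le_mul_of_nonneg_left (Finset.sum_le_sum fun y _ => ?_) hγ0
            rw [abs_mul, abs_of_nonneg (hPnonneg x0 y)]
            exact mul_le_mul_of_nonneg_left (hx0 y (Finset.mem_univ y)) (hPnonneg x0 y)
        _ = γ * |h x0| := by rw [← Finset.sum_mul, hProw x0, one_mul]
    nlinarith [abs_nonneg (h x0)]
  funext x
  have := hx0 x (Finset.mem_univ x)
  have : |h x| = 0 := le_antisymm (hz ▸ this) (abs_nonneg _)
  simpa using abs_eq_zero.mp this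

lemma aux_exists_sol {X : Type*} [Fintype X] [Nonempty X]
    (P : X → X → ℝ) (hPnonneg : ∀ x y, 0 ≤ P x y) (hProw : ∀ x, ∑ y, P x y = 1)
    (γ : ℝ) (hγ0 : 0 ≤ γ) (hγ1 : γ < 1) (c : X → ℝ) :
    ∃ Q : X → ℝ, ∀ x, Q x - γ * ∑ y, P x y * Q y = c x := by
  let L : (X → ℝ) →ₗ[ℝ] (X → ℝ) :=
    { toFun := fun Q x => Q x - γ * ∑ y, P x y * Q y
      map_add' := by
        intro a b; funext x
        simp only [Pi.add_apply]
        rw [show (∑ y, P x y * (a y + b y))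
            = (∑ y, P x y * a y) + ∑ y, P x y * b y from by
          rw [← Finset.sum_add_distrib]
          exact Finset.sum_congr rfl fun y _ => mul_add _ _ _]
        ring
      map_smul' := by
        intro m a; funext x
        simp only [Pi.smul_apply, smul_eq_mul, RingHom.id_apply]
        rw [show (∑ y, P x y * (m * a y)) = m * ∑ y, P x y * a y from by
          rw [Finset.mul_sum]
          exact Finset.sum_congr rfl fun y _ => by ring]
        ring }
  have hinj : Function.Injective L := by
    rw [injective_iff_map_eq_zero]
    intro h hL
    apply aux_fix_zero P hPnonneg hProw γ hγ0 hγ1 h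
    intro x
    have := congrFun hL x
    simp only [L, LinearMap.coe_mk, AddHom.coe_mk, Pi.zero_apply] at this
    linarith
  have hsurj : Function.Surjective L := (LinearMap.injective_iff_surjective).mp hinj
  obtain ⟨Q, hQ⟩ := hsurj c
  exact ⟨Q, fun x => congrFun hQ x⟩

/-- The unconstrained primal objective `J` has a unique global minimizer `Q*`,
the dual variable recovered from it is the true stationary distribution correction ratio:
`(α_R R + γ P Q* - Q*)/α_ζ = dπ/dD` pointwise, and consequently the resulting dual estimate
equals the policy value `∑ dπ·R`. -/
theorem stmt_16 {X : Type*} [Fintype X] [Nonempty X]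
    (P : X → X → ℝ) (hPnonneg : ∀ x y, 0 ≤ P x y) (hProw : ∀ x, ∑ y, P x y = 1)
    (γ : ℝ) (hγ0 : 0 ≤ γ) (hγ1 : γ < 1)
    (R : X → ℝ) (μ : X → ℝ) (hμnonneg : ∀ x, 0 ≤ μ x) (hμsum : ∑ x, μ x = 1)
    (dD : X → ℝ) (hdD : ∀ x, 0 < dD x)
    (αζ : ℝ) (hαζ : 0 < αζ) (αR : ℝ)
    (dπ : X → ℝ) (hdπ : ∀ x, dπ x = (1 - γ) * μ x + γ * ∑ y, P y x * dπ y) :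
    ∃ Qs : X → ℝ,
      (∀ Q : X → ℝ, unconstrainedPrimal P γ R μ dD αζ αR Qs ≤
          unconstrainedPrimal P γ R μ dD αζ αR Q) ∧
      (∀ Qs' : X → ℝ, (∀ Q : X → ℝ, unconstrainedPrimal P γ R μ dD αζ αR Qs' ≤
          unconstrainedPrimal P γ R μ dD αζ αR Q) → Qs' = Qs) ∧
      (∀ x, (αR * R x + γ * (∑ y, P x y * Qs y) - Qs x) / αζ = dπ x / dD x) ∧
      (∑ x, dD x * ((αR * R x + γ * (∑ y, P x y * Qs y) - Qs x) / αζ) * R x =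
        ∑ x, dπ x * R x) := by
  obtain ⟨Qs, hQs⟩ := aux_exists_sol P hPnonneg hProw γ hγ0 hγ1
    (fun x => αR * R x - αζ * dπ x / dD x)
  -- residual at Qs
  have hres : ∀ x, αR * R x + γ * (∑ y, P x y * Qs y) - Qs x = αζ * dπ x / dD x := by
    intro x
    have := hQs x
    linarith
  -- cross term lemma
  have hcross : ∀ h : X → ℝ,
      ∑ x, dπ x * (γ * (∑ y, P x y * h y) - h x) = -((1 - γ) * ∑ x, μ x * h x) := by
    intro h
    have swap : ∑ x, dπ x * (γ * ∑ y, P x y * h y)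
        = ∑ y, (γ * ∑ x, P x y * dπ x) * h y := by
      calc ∑ x, dπ x * (γ * ∑ y, P x y * h y)
          = ∑ x, ∑ y, dπ x * (γ * (P x y * h y)) := by
            refine Finset.sum_congr rfl fun x _ => ?_
            rw [Finset.mul_sum, Finset.mul_sum]
        _ = ∑ y, ∑ x, dπ x * (γ * (P x y * h y)) := Finset.sum_comm
        _ = ∑ y, (γ * ∑ x, P x y * dπ x) * h y := by
            refine Finset.sum_congr rfl fun y _ => ?_
            rw [Finset.mul_sum, Finset.sum_mul]
            exact Finset.sum_congr rfl fun x _ => by ring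
    calc ∑ x, dπ x * (γ * (∑ y, P x y * h y) - h x)
        = (∑ x, dπ x * (γ * ∑ y, P x y * h y)) - ∑ x, dπ x * h x := by
          rw [← Finset.sum_sub_distrib]
          exact Finset.sum_congr rfl fun x _ => by ring
      _ = (∑ y, (dπ y - (1 - γ) * μ y) * h y) - ∑ x, dπ x * h x := by
          rw [swap]
          congr 1
          refine Finset.sum_congr rfl fun y _ => ?_
          have := hdπ y
          have : γ * ∑ x, P x y * dπ x = dπ y - (1 - γ) * μ y := by linarith
          rw [this]
      _ = -((1 - γ) * ∑ x, μ x * h x) := by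
          rw [Finset.mul_sum, ← Finset.sum_sub_distrib]
          rw [← Finset.sum_neg_distrib]
          exact Finset.sum_congr rfl fun x _ => by ring
  -- decomposition of J
  have hdec : ∀ Q : X → ℝ,
      unconstrainedPrimal P γ R μ dD αζ αR Q =
        unconstrainedPrimal P γ R μ dD αζ αR Qs +
          (1 / (2 * αζ)) *
            ∑ x, dD x * (γ * (∑ y, P x y * (Q y - Qs y)) - (Q x - Qs x)) ^ 2 := by
    intro Q
    set h : X → ℝ := fun x => Q x - Qs x with hh
    have hdelta : ∀ x, αR * R x + γ * (∑ y, P x y * Q y) - Q x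
        = (αR * R x + γ * (∑ y, P x y * Qs y) - Qs x)
          + (γ * (∑ y, P x y * h y) - h x) := by
      intro x
      have : ∑ y, P x y * h y = (∑ y, P x y * Q y) - ∑ y, P x y * Qs y := by
        rw [← Finset.sum_sub_distrib]
        exact Finset.sum_congr rfl fun y _ => by ring
      rw [this]; simp only [hh]; ring
    have hsq : ∑ x, dD x * (αR * R x + γ * (∑ y, P x y * Q y) - Q x) ^ 2
        = (∑ x, dD x * (αR * R x + γ * (∑ y, P x y * Qs y) - Qs x) ^ 2)
          + 2 * αζ * (∑ x, dπ x * (γ * (∑ y, P x y * h y) - h x))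
          + ∑ x, dD x * (γ * (∑ y, P x y * h y) - h x) ^ 2 := by
      rw [Finset.mul_sum, ← Finset.sum_add_distrib, ← Finset.sum_add_distrib]
      refine Finset.sum_congr rfl fun x _ => ?_
      rw [hdelta x, hres x]
      have hd : dD x ≠ 0 := ne_of_gt (hdD x)
      field_simp
      ring
    have hμQ : ∑ x, μ x * Q x = (∑ x, μ x * Qs x) + ∑ x, μ x * h x := by
      rw [← Finset.sum_add_distrib]
      refine Finset.sum_congr rfl fun x _ => ?_
      simp only [hh]; ring
    unfold unconstrainedPrimal
    rw [hsq, hμQ, hcross h]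
    have hαζ' : (2 : ℝ) * αζ ≠ 0 := by positivity
    field_simp
    ring
  refine ⟨Qs, ?_, ?_, ?_, ?_⟩
  · intro Q
    rw [hdec Q]
    have : 0 ≤ (1 / (2 * αζ)) *
        ∑ x, dD x * (γ * (∑ y, P x y * (Q y - Qs y)) - (Q x - Qs x)) ^ 2 := by
      apply mul_nonneg (by positivity)
      exact Finset.sum_nonneg fun x _ => mul_nonneg (le_of_lt (hdD x)) (sq_nonneg _)
    linarith
  · intro Qs' hmin
    have h1 := hmin Qs
    rw [hdec Qs'] at h1
    have hsum0 : ∑ x, dD x * (γ * (∑ y, P x y * (Qs' y - Qs y)) - (Qs' x - Qs x)) ^ 2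
        = 0 := by
      have hnn : 0 ≤ ∑ x, dD x * (γ * (∑ y, P x y * (Qs' y - Qs y)) - (Qs' x - Qs x)) ^ 2 :=
        Finset.sum_nonneg fun x _ => mul_nonneg (le_of_lt (hdD x)) (sq_nonneg _)
      have hpos : (0:ℝ) < 1 / (2 * αζ) := by positivity
      nlinarith
    have hterm : ∀ x ∈ Finset.univ,
        dD x * (γ * (∑ y, P x y * (Qs' y - Qs y)) - (Qs' x - Qs x)) ^ 2 = 0 :=
      (Finset.sum_eq_zero_iff_of_nonneg
        (fun x _ => mul_nonneg (le_of_lt (hdD x)) (sq_nonneg _))).mp hsum0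
    have hfix : ∀ x, (Qs' x - Qs x) = γ * ∑ y, P x y * (Qs' y - Qs y) := by
      intro x
      have := hterm x (Finset.mem_univ x)
      have h2 : (γ * (∑ y, P x y * (Qs' y - Qs y)) - (Qs' x - Qs x)) ^ 2 = 0 := by
        rcases mul_eq_zero.mp this with h | h
        · exact absurd h (ne_of_gt (hdD x))
        · exact h
      have := pow_eq_zero_iff (n := 2) (by norm_num) |>.mp h2
      linarith
    have := aux_fix_zero P hPnonneg hProw γ hγ0 hγ1 (fun x => Qs' x - Qs x) hfix
    funext x
    have := congrFun this x
    simp only [Pi.zero_apply] at this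
    linarith
  · intro x
    have h1 : αζ ≠ 0 := ne_of_gt hαζ
    have h2 : dD x ≠ 0 := ne_of_gt (hdD x)
    rw [hres x]
    field_simp
  · refine Finset.sum_congr rfl fun x _ => ?_
    rw [hres x]
    have hd : dD x ≠ 0 := ne_of_gt (hdD x)
    field_simp
end
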